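/- With c processors, where each round processes up to c shunt operations in parallel, contracting a strictly binary e-join tree with n vertices requires at most 2(⌈log₂ c⌉ + 2⌈n/(4c)⌉) parallel shunt steps: first 2⌈n/(4c)⌉ − 1 full-load steps until the number of operations per round fits within c, followed by 2⌈log₂ c⌉ halving steps. -/

import Mathlib

/-- Total number of parallel steps of the shunt-based contraction with `c`
processors, starting from `ℓ` leaves: each round performs `⌈ℓ/2⌉` shunt operations,
costing `⌈⌈ℓ/2⌉/c⌉` parallel steps, after which `⌈ℓ/2⌉` leaves remain; the process
stops when `ℓ ≤ 2`. -/
def parSteps (c : ℕ) (ℓ : ℕ) : ℕ :=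
  if ℓ ≤ 2 then 0
  else ((ℓ + 1) / 2 + (c - 1)) / c + parSteps c ((ℓ + 1) / 2)
termination_by ℓ
decreasing_by omega

/-- Main recursive bound: `parSteps c ℓ ≤ ⌈log₂ ℓ⌉ + ⌈ℓ/c⌉`. -/
lemma parSteps_le (c : ℕ) (hc : 1 ≤ c) : ∀ ℓ, parSteps c ℓ ≤ Nat.clog 2 ℓ + (ℓ + c - 1) / c := by
  intro ℓ
  induction ℓ using Nat.strong_induction_on with
  | _ ℓ ih =>
    rw [parSteps]
    split
    · exact Nat.zero_le _
    · rename_i h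
      push_neg at h
      set ℓ' := (ℓ + 1) / 2 with hℓ'
      have hlt : ℓ' < ℓ := by omega
      have hIH := ih ℓ' hlt
      have hclog : Nat.clog 2 ℓ = Nat.clog 2 ℓ' + 1 := by
        rw [Nat.clog_of_two_le (by norm_num) (by omega)]
        have e2 : (ℓ + 2 - 1) / 2 = ℓ' := by omega
        rw [e2]
      -- ceil division facts
      set q := (ℓ' + c - 1) / c with hq
      have hcc : ℓ' + (c - 1) = ℓ' + c - 1 := by omega
      have h1 : q * c ≤ ℓ' + c - 1 := Nat.div_mul_le_self _ _
      have hq1 : 1 ≤ q := by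
        rw [hq, Nat.le_div_iff_mul_le (by omega)]
        omega
      have key : (2 * q - 1) * c ≤ ℓ + c - 1 := by
        have e : (2 * q - 1) * c = 2 * (q * c) - c := by
          rw [Nat.sub_mul, one_mul, mul_assoc]
        rw [e]
        omega
      have h2 : 2 * q - 1 ≤ (ℓ + c - 1) / c := by
        rw [Nat.le_div_iff_mul_le (by omega)]
        exact key
      calc (ℓ' + (c - 1)) / c + parSteps c ℓ'
          ≤ q + (Nat.clog 2 ℓ' + q) := by rw [hcc]; exact Nat.add_le_add_left hIH _
        _ ≤ Nat.clog 2 ℓ + (ℓ + c - 1) / c := by rw [hclog]; omega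

theorem stmt14 (n c : ℕ) (hc : 1 ≤ c) (hcn : c ≤ (n + 3) / 4) :
    parSteps c ((n + 1) / 2)
      ≤ 2 * (Nat.clog 2 c + 2 * ((n + 4 * c - 1) / (4 * c))) := by
  have hn : 1 ≤ n := by omega
  obtain ⟨K, hK⟩ : ∃ K, K = (n + 4 * c - 1) / (4 * c) := ⟨_, rfl⟩
  rw [← hK]
  obtain ⟨M, hM⟩ : ∃ M, M = c * K := ⟨_, rfl⟩
  set ℓ := (n + 1) / 2 with hℓ
  have hK1 : 1 ≤ K := by
    rw [hK, Nat.le_div_iff_mul_le (by omega)]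
    omega
  have hd := Nat.div_add_mod (n + 4 * c - 1) (4 * c)
  rw [← hK] at hd
  have hm : (n + 4 * c - 1) % (4 * c) < 4 * c := Nat.mod_lt _ (by omega)
  have he : 4 * c * K = 4 * M := by rw [hM]; ring
  have hnK : n ≤ 4 * M := by omega
  have hlK : ℓ ≤ 2 * M := by omega
  have hceil : (ℓ + c - 1) / c ≤ 2 * K := by
    rw [Nat.div_le_iff_le_mul_add_pred (by omega)]
    have he2 : c * (2 * K) = 2 * M := by rw [hM]; ring
    omega
  have hclogK : Nat.clog 2 K ≤ K - 1 := by
    rw [Nat.clog_le_iff_le_pow (by norm_num)]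
    have := Nat.lt_two_pow_self (n := K - 1)
    omega
  have hclogℓ : Nat.clog 2 ℓ ≤ Nat.clog 2 c + Nat.clog 2 K + 1 := by
    rw [Nat.clog_le_iff_le_pow (by norm_num)]
    have h1 : c ≤ 2 ^ Nat.clog 2 c := Nat.le_pow_clog (by norm_num) c
    have h2 : K ≤ 2 ^ Nat.clog 2 K := Nat.le_pow_clog (by norm_num) K
    calc ℓ ≤ 2 * (c * K) := by omega
      _ ≤ 2 * 2 ^ Nat.clog 2 c * 2 ^ Nat.clog 2 K := by
          rw [← mul_assoc]
          exact Nat.mul_le_mul (Nat.mul_le_mul_left 2 h1) h2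
      _ = 2 ^ (Nat.clog 2 c + Nat.clog 2 K + 1) := by ring
  have := parSteps_le c hc ℓ
  omega
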